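/- Let G be a group, and let g ∈ G act on square matrices over a commutative ring R of size n by conjugation, m ↦ g m g⁻¹, where g is an invertible n×n matrix. If E is a subset of invertible matrices such that g^k E g^{-k} ⊆ L for every k ≥ 1, where L is an R-submodule of the matrix ring, then g⁻¹ E g ⊆ L, provided L also contains g^0 E g^0 = E. (Concretely: since by Cayley–Hamilton the map m ↦ g⁻¹ m g is a polynomial in the map m ↦ g m g⁻¹ with coefficients in R, any R-submodule of M_n(R) containing all nonnegative conjugation-powers of E also contains g⁻¹Eg.) -/

import Mathlib

open Matrix

/-- Cayley–Hamilton trick: let `g ∈ GL_n(R)` and let `L` be an `R`-submodule of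
`M_n(R)`.  If all the nonnegative conjugation-powers `gᵏ E g⁻ᵏ` (`k ≥ 0`,
including `k = 0`, i.e. `E ⊆ L`) of a set of matrices `E` land in `L`, then
`g⁻¹ E g ⊆ L`. -/
theorem inv_conj_mem_of_pow_conj_mem
    {R : Type*} [CommRing R] {n : ℕ}
    (g : GL (Fin n) R)
    (L : Submodule R (Matrix (Fin n) (Fin n) R))
    (E : Set (Matrix (Fin n) (Fin n) R))
    (h : ∀ k : ℕ, ∀ m ∈ E,
      (↑(g ^ k) : Matrix (Fin n) (Fin n) R) * m * (↑((g ^ k)⁻¹) : Matrix (Fin n) (Fin n) R) ∈ L) :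
    ∀ m ∈ E, (↑(g⁻¹) : Matrix (Fin n) (Fin n) R) * m * (↑g : Matrix (Fin n) (Fin n) R) ∈ L := by
  intro m hm
  -- conjugation and its inverse as endomorphisms
  set φ : Module.End R (Matrix (Fin n) (Fin n) R) :=
    (LinearMap.mulLeft R (↑g : Matrix (Fin n) (Fin n) R)).comp
      (LinearMap.mulRight R (↑g⁻¹ : Matrix (Fin n) (Fin n) R)) with hφ
  set ψ : Module.End R (Matrix (Fin n) (Fin n) R) :=
    (LinearMap.mulLeft R (↑g⁻¹ : Matrix (Fin n) (Fin n) R)).comp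
      (LinearMap.mulRight R (↑g : Matrix (Fin n) (Fin n) R)) with hψ
  have hgg : (↑g : Matrix (Fin n) (Fin n) R) * (↑g⁻¹ : Matrix (Fin n) (Fin n) R) = 1 := by
    rw [← Units.val_mul, mul_inv_cancel, Units.val_one]
  have hgg' : (↑g⁻¹ : Matrix (Fin n) (Fin n) R) * (↑g : Matrix (Fin n) (Fin n) R) = 1 := by
    rw [← Units.val_mul, inv_mul_cancel, Units.val_one]
  have hφ_apply : ∀ x : Matrix (Fin n) (Fin n) R,
      φ x = (↑g : Matrix (Fin n) (Fin n) R) * x * (↑g⁻¹ : Matrix (Fin n) (Fin n) R) := by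
    intro x; simp [hφ, LinearMap.mulLeft_apply, LinearMap.mulRight_apply, mul_assoc]
  have hψ_apply : ∀ x : Matrix (Fin n) (Fin n) R,
      ψ x = (↑g⁻¹ : Matrix (Fin n) (Fin n) R) * x * (↑g : Matrix (Fin n) (Fin n) R) := by
    intro x; simp [hψ, LinearMap.mulLeft_apply, LinearMap.mulRight_apply, mul_assoc]
  have hφψ : φ * ψ = 1 := by
    refine LinearMap.ext fun x => ?_
    simp only [Module.End.mul_apply, Module.End.one_apply, hφ_apply, hψ_apply]
    calc (↑g : Matrix (Fin n) (Fin n) R) * ((↑g⁻¹ : Matrix (Fin n) (Fin n) R) * x *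
            (↑g : Matrix (Fin n) (Fin n) R)) * (↑g⁻¹ : Matrix (Fin n) (Fin n) R)
        = ((↑g : Matrix (Fin n) (Fin n) R) * (↑g⁻¹ : Matrix (Fin n) (Fin n) R)) * x *
            ((↑g : Matrix (Fin n) (Fin n) R) * (↑g⁻¹ : Matrix (Fin n) (Fin n) R)) := by
          noncomm_ring
      _ = x := by rw [hgg, one_mul, mul_one]
  have hψφ : ψ * φ = 1 := by
    refine LinearMap.ext fun x => ?_
    simp only [Module.End.mul_apply, Module.End.one_apply, hφ_apply, hψ_apply]
    calc (↑g⁻¹ : Matrix (Fin n) (Fin n) R) * ((↑g : Matrix (Fin n) (Fin n) R) * x *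
            (↑g⁻¹ : Matrix (Fin n) (Fin n) R)) * (↑g : Matrix (Fin n) (Fin n) R)
        = ((↑g⁻¹ : Matrix (Fin n) (Fin n) R) * (↑g : Matrix (Fin n) (Fin n) R)) * x *
            ((↑g⁻¹ : Matrix (Fin n) (Fin n) R) * (↑g : Matrix (Fin n) (Fin n) R)) := by
          noncomm_ring
      _ = x := by rw [hgg', one_mul, mul_one]
  -- powers of φ are conjugations by powers of g
  have hpow : ∀ k : ℕ, ∀ x : Matrix (Fin n) (Fin n) R,
      (φ ^ k) x = (↑(g ^ k) : Matrix (Fin n) (Fin n) R) * x *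
        (↑((g ^ k)⁻¹) : Matrix (Fin n) (Fin n) R) := by
    intro k
    induction k with
    | zero => intro x; simp
    | succ k ih =>
      intro x
      rw [pow_succ', Module.End.mul_apply, ih, hφ_apply,
        show g ^ (k + 1) = g * g ^ k from pow_succ' g k, _root_.mul_inv_rev]
      push_cast [Units.val_mul]
      noncomm_ring
  -- every polynomial in φ applied to m lands in L
  have hmem : ∀ q : Polynomial R, (Polynomial.aeval φ q) m ∈ L := by
    intro q
    induction q using Polynomial.induction_on' with
    | add p q hp hq => rw [map_add, LinearMap.add_apply]; exact L.add_mem hp hq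
    | monomial k a =>
      rw [Polynomial.aeval_monomial, Module.End.mul_apply, Module.algebraMap_end_apply]
      exact L.smul_mem a (by rw [hpow]; exact h k m hm)
  -- Cayley–Hamilton
  set p := φ.charpoly with hp
  have hCH : Polynomial.aeval φ p = 0 := φ.aeval_self_charpoly
  set A := Polynomial.aeval φ p.divX with hA
  have hsplit : φ * A + (p.coeff 0) • (1 : Module.End R (Matrix (Fin n) (Fin n) R)) = 0 := by
    have hdvx := Polynomial.X_mul_divX_add p
    calc φ * A + (p.coeff 0) • (1 : Module.End R (Matrix (Fin n) (Fin n) R))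
        = Polynomial.aeval φ (Polynomial.X * p.divX + Polynomial.C (p.coeff 0)) := by
          rw [map_add, _root_.map_mul, Polynomial.aeval_X, Polynomial.aeval_C,
            Algebra.algebraMap_eq_smul_one]
      _ = Polynomial.aeval φ p := by rw [hdvx]
      _ = 0 := hCH
  have hkey : (p.coeff 0) • ψ = -A := by
    have hmul := congrArg (fun z => ψ * z) hsplit
    simp only [mul_add, ← mul_assoc, hψφ, one_mul, mul_zero, mul_smul_comm, mul_one] at hmul
    linear_combination (norm := module) hmul
  -- the constant coefficient is a unit
  have hdet : IsUnit (LinearMap.det φ) := by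
    apply IsUnit.of_mul_eq_one (LinearMap.det ψ)
    have hcomp : φ ∘ₗ ψ = LinearMap.id := hφψ
    rw [← LinearMap.det_comp, hcomp, LinearMap.det_id]
  have hcoeff : IsUnit (p.coeff 0) := by
    rw [LinearMap.det_eq_sign_charpoly_coeff] at hdet
    exact isUnit_of_mul_isUnit_right hdet
  obtain ⟨u, hu⟩ := hcoeff
  -- conclude
  have h1 : (p.coeff 0) • (ψ m) = -(A m) := by
    have := congrArg (fun f : Module.End R (Matrix (Fin n) (Fin n) R) => f m) hkey
    simpa using this
  have h2 : ψ m = (↑u⁻¹ : R) • (-(A m)) := by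
    rw [← h1, ← hu, smul_smul, Units.inv_mul, one_smul]
  rw [← hψ_apply m] at *
  rw [h2]
  exact L.smul_mem _ (L.neg_mem (hmem p.divX))
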